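/- Let T be a transit cluster in a DAG G = (V,E) and let G' be the graph induced by clustering T into a single vertex t. For disjoint sets V_1, V_2, V_3 ⊆ V with either T ⊆ V_i or T ∩ V_i = ∅ for each i ∈ {1,2,3}, let V_1', V_2', V_3' be the clustering-equivalent sets in G' (replacing T by {t} where applicable). If V_1' and V_2' are d-separated given V_3' in G', then V_1 and V_2 are d-separated given V_3 in G. -/

import Mathlib

variable {α : Type*}

/-- All edges lie within the vertex set `V`. -/
def EdgesIn (V : Set α) (E : α → α → Prop) : Prop :=
  ∀ u v, E u v → u ∈ V ∧ v ∈ V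

/-- The edge relation has no directed cycles. -/
def Acyclic (E : α → α → Prop) : Prop :=
  ∀ v, ¬ Relation.TransGen E v v

/-- A finite directed acyclic graph on vertex set `V`. -/
def IsDAG (V : Set α) (E : α → α → Prop) : Prop :=
  V.Finite ∧ EdgesIn V E ∧ Acyclic E

/-- Receivers of `T`: members of `T` with a parent outside `T`. -/
def recs (E : α → α → Prop) (T : Set α) : Set α :=
  {v | v ∈ T ∧ ∃ u, u ∉ T ∧ E u v}

/-- Emitters of `T`: members of `T` with a child outside `T`. -/
def emis (E : α → α → Prop) (T : Set α) : Set α :=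
  {v | v ∈ T ∧ ∃ u, u ∉ T ∧ E v u}

/-- Edges of `G[T^=]`: the subgraph induced by `T` with incoming edges of
receivers and outgoing edges of emitters removed. -/
def CutEdge (E : α → α → Prop) (T : Set α) (u v : α) : Prop :=
  u ∈ T ∧ v ∈ T ∧ E u v ∧ v ∉ recs E T ∧ u ∉ emis E T

/-- Undirected reachability with respect to an edge relation. -/
def UndirReach (E : α → α → Prop) (u v : α) : Prop :=
  Relation.ReflTransGen (fun a b => E a b ∨ E b a) u v

/-- `T` is a transit cluster in the graph `(V, E)`. -/
def IsTransitCluster (V : Set α) (E : α → α → Prop) (T : Set α) : Prop :=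
  T.Nonempty ∧ T ⊂ V ∧
  (∀ r₁ ∈ recs E T, ∀ r₂ ∈ recs E T,
    {u | u ∉ T ∧ E u r₁} = {u | u ∉ T ∧ E u r₂}) ∧
  (∀ e₁ ∈ emis E T, ∀ e₂ ∈ emis E T,
    {u | u ∉ T ∧ E e₁ u} = {u | u ∉ T ∧ E e₂ u}) ∧
  (∀ x ∈ T, ∃ w, (w ∈ recs E T ∨ w ∈ emis E T) ∧ UndirReach (CutEdge E T) x w) ∧
  ((emis E T).Nonempty → ∀ r ∈ recs E T, ∃ e ∈ emis E T, Relation.ReflTransGen E r e) ∧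
  ((recs E T).Nonempty → ∀ e ∈ emis E T, ∃ r ∈ recs E T, Relation.ReflTransGen E r e)

/-- Vertex set of the graph obtained by clustering `T` into the new vertex `t`. -/
def ClusterVerts (V T : Set α) (t : α) : Set α := (V \ T) ∪ {t}

/-- Edge relation of the graph obtained by clustering `T` into the new vertex `t`:
edges not touching `T` are kept, the parents of `t` are the external parents of
`recs T`, and the children of `t` are the external children of `emis T`. -/
def ClusterEdge (E : α → α → Prop) (T : Set α) (t : α) (u v : α) : Prop :=
  (u ∉ T ∧ v ∉ T ∧ E u v) ∨
  (u ∉ T ∧ u ≠ t ∧ v = t ∧ ∃ r ∈ recs E T, E u r) ∨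
  (u = t ∧ v ∉ T ∧ v ≠ t ∧ ∃ e ∈ emis E T, E e v)

/-- A transit component: a transit cluster that is connected (undirectedly)
in the subgraph it induces. -/
def IsTransitComponent (V : Set α) (E : α → α → Prop) (T : Set α) : Prop :=
  IsTransitCluster V E T ∧
  ∀ u ∈ T, ∀ v ∈ T, UndirReach (fun a b => a ∈ T ∧ b ∈ T ∧ E a b) u v

/-- `b` is an active interior vertex of a path segment `a - b - c` given `C`:
if `b` is a collider on the segment it has a descendant in `C`; otherwise it is
not in `C`. -/
def ActiveTriple (E : α → α → Prop) (C : Set α) (a b c : α) : Prop :=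
  (E a b ∧ E c b ∧ ∃ d ∈ C, Relation.ReflTransGen E b d) ∨
  (¬(E a b ∧ E c b) ∧ b ∉ C)

/-- Every interior vertex of the list is active given `C`. -/
def ActiveTriples (E : α → α → Prop) (C : Set α) : List α → Prop
  | a :: b :: c :: rest => ActiveTriple E C a b c ∧ ActiveTriples E C (b :: c :: rest)
  | _ => True

/-- There is a d-connecting (active) path from `u` to `v` given `C`. -/
def ActivePath (E : α → α → Prop) (C : Set α) (u v : α) : Prop :=
  ∃ p : List α, p.Nodup ∧ p.head? = some u ∧ p.getLast? = some v ∧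
    p.Chain' (fun a b => E a b ∨ E b a) ∧ ActiveTriples E C p

/-- `A` and `B` are d-separated given `C`: every path between them is blocked. -/
def DSep (E : α → α → Prop) (A B C : Set α) : Prop :=
  ∀ u ∈ A, ∀ v ∈ B, ¬ ActivePath E C u v


section AuxLemmas

open Relation List

variable {E : α → α → Prop} {C T V : Set α} {t : α}

lemma activeTriples_tail {x : α} {l : List α} (h : ActiveTriples E C (x :: l)) :
    ActiveTriples E C l := by
  match l with
  | [] => trivial
  | [y] => trivial
  | y :: z :: l' => exact h.2

lemma activeTriples_infix : ∀ (l : List α) {r : List α} {a b c : α},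
    ActiveTriples E C (l ++ a :: b :: c :: r) → ActiveTriple E C a b c
  | [], _, _, _, _, h => h.1
  | x :: l, r, a, b, c, h => activeTriples_infix l (activeTriples_tail h)

lemma activeTriples_of_forall : ∀ (p : List α),
    (∀ l r a b c, p = l ++ a :: b :: c :: r → ActiveTriple E C a b c) →
    ActiveTriples E C p
  | [], _ => trivial
  | [_], _ => trivial
  | [_, _], _ => trivial
  | a :: b :: c :: rest, h =>
    ⟨h [] rest a b c rfl,
     activeTriples_of_forall (b :: c :: rest) fun l r a' b' c' hl =>
       h (a :: l) r a' b' c' (by rw [List.cons_append]; rw [hl])⟩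

lemma activeTriples_infix' (l m r : List α) (h : ActiveTriples E C (l ++ m ++ r)) :
    ActiveTriples E C m :=
  activeTriples_of_forall m fun l' r' a b c hm =>
    activeTriples_infix (l ++ l') (r := r' ++ r)
      (by rw [hm] at h; simpa [List.append_assoc] using h)

lemma chain'_middle {R : α → α → Prop} (l : List α) {x y : α} {r : List α}
    (h : List.Chain' R (l ++ x :: y :: r)) : R x y := by
  have h2 : List.Chain' R [x, y] := h.infix ⟨l, r, by simp⟩
  exact (List.isChain_cons_cons.mp h2).1

lemma chain'_transfer {R S : α → α → Prop} : ∀ (p : List α), List.Chain' R p →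
    (∀ x ∈ p, ∀ y ∈ p, R x y → S x y) → List.Chain' S p
  | [], _, _ => List.isChain_nil
  | [_], _, _ => List.isChain_singleton _
  | a :: b :: l, h, himp => by
      unfold List.Chain' at h ⊢
      rw [List.isChain_cons_cons] at h ⊢
      exact ⟨himp a (by simp) b (by simp) h.1,
        chain'_transfer (b :: l) h.2 fun x hx y hy hr =>
          himp x (List.mem_cons_of_mem a hx) y (List.mem_cons_of_mem a hy) hr⟩

lemma exists_decomp (T : Set α) : ∀ (p : List α),
    (∀ x ∈ p, x ∉ T) ∨
    ∃ A m₁ M' m₂ M₂ B, p = A ++ (m₁ :: M') ++ B ∧ m₁ :: M' = M₂ ++ [m₂] ∧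
      (∀ x ∈ A, x ∉ T) ∧ (∀ x ∈ B, x ∉ T) ∧ m₁ ∈ T ∧ m₂ ∈ T := by
  intro p
  induction p with
  | nil => left; simp
  | cons x p ih =>
    by_cases hx : x ∈ T
    · rcases ih with h | ⟨A, m₁, M', m₂, M₂, B, hp, hM, hA, hB, h₁, h₂⟩
      · right; exact ⟨[], x, [], x, [], p, by simp, by simp, by simp, h, hx, hx⟩
      · right
        refine ⟨[], x, A ++ m₁ :: M', m₂, x :: (A ++ M₂), B, ?_, ?_, by simp, hB, hx, h₂⟩
        · simp [hp]
        · simp [hM]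
    · rcases ih with h | ⟨A, m₁, M', m₂, M₂, B, hp, hM, hA, hB, h₁, h₂⟩
      · left
        intro y hy
        rcases List.mem_cons.mp hy with rfl | hy
        exacts [hx, h y hy]
      · right
        refine ⟨x :: A, m₁, M', m₂, M₂, B, by simp [hp], hM, ?_, hB, h₁, h₂⟩
        intro y hy
        rcases List.mem_cons.mp hy with rfl | hy
        exacts [hx, hA y hy]

lemma segment_collider (hnb : ∀ x y, E x y → E y x → False) :
    ∀ (M' : List α) (a m₁ mL c : α),
      List.Chain' (fun a b => E a b ∨ E b a) (a :: m₁ :: M' ++ [c]) →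
      ActiveTriples E C (a :: m₁ :: M' ++ [c]) →
      E a m₁ → (m₁ :: M').getLast? = some mL → E c mL →
      ∃ d ∈ C, Relation.ReflTransGen E m₁ d
  | [], a, m₁, mL, c, hch, hact, he, hL, heC => by
      obtain rfl : m₁ = mL := by simpa using hL
      have htr : ActiveTriple E C a m₁ c := hact.1
      rcases htr with ⟨_, _, d, hd, hr⟩ | ⟨hn, _⟩
      · exact ⟨d, hd, hr⟩
      · exact absurd ⟨he, heC⟩ hn
  | y :: M'', a, m₁, mL, c, hch, hact, he, hL, heC => by
      have hedge : E m₁ y ∨ E y m₁ := chain'_middle [a] hch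
      rcases hedge with h1 | h2
      · have hLs : (y :: M'').getLast? = some mL := by
          rw [List.getLast?_cons_cons] at hL; exact hL
        obtain ⟨d, hd, hr⟩ := segment_collider hnb M'' m₁ y mL c
          (List.isChain_cons_cons.mp hch).2 (activeTriples_tail hact) h1 hLs heC
        exact ⟨d, hd, Relation.ReflTransGen.head h1 hr⟩
      · have htr : ActiveTriple E C a m₁ y := hact.1
        rcases htr with ⟨_, _, d, hd, hr⟩ | ⟨hn, _⟩
        · exact ⟨d, hd, hr⟩
        · exact absurd ⟨he, h2⟩ hn

lemma lift_reach (htV : t ∉ V) (hE : EdgesIn V E) {b d : α}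
    (h : Relation.ReflTransGen E b d) :
    ∀ b' d', ((b ∈ T ∧ b' = t) ∨ (b ∉ T ∧ b' = b)) →
      ((d ∈ T ∧ d' = t) ∨ (d ∉ T ∧ d' = d)) →
      Relation.ReflTransGen (ClusterEdge E T t) b' d' := by
  induction h with
  | refl =>
      rintro b' d' (⟨hb, rfl⟩ | ⟨hb, rfl⟩) (⟨hd, rfl⟩ | ⟨hd, rfl⟩)
      · exact Relation.ReflTransGen.refl
      · exact absurd hb hd
      · exact absurd hd hb
      · exact Relation.ReflTransGen.refl
  | @tail c d hbc hcd ih =>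
      intro b' d' hb hd
      have hcV : c ∈ V := (hE c d hcd).1
      have hdV : d ∈ V := (hE c d hcd).2
      by_cases hc : c ∈ T
      · have ihc := ih b' t hb (Or.inl ⟨hc, rfl⟩)
        rcases hd with ⟨hdT, hd'⟩ | ⟨hdT, hd'⟩
        · rw [hd']; exact ihc
        · rw [hd']
          exact ihc.tail (Or.inr (Or.inr ⟨rfl, hdT, fun hh => htV (hh ▸ hdV), c,
            ⟨hc, d, hdT, hcd⟩, hcd⟩))
      · have ihc := ih b' c hb (Or.inr ⟨hc, rfl⟩)
        rcases hd with ⟨hdT, hd'⟩ | ⟨hdT, hd'⟩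
        · rw [hd']
          exact ihc.tail (Or.inr (Or.inl ⟨hc, fun hh => htV (hh ▸ hcV), rfl, d,
            ⟨hdT, c, hc, hcd⟩, hcd⟩))
        · rw [hd']; exact ihc.tail (Or.inl ⟨hc, hdT, hcd⟩)

lemma clusterEdge_not_both (htV : t ∉ V) (hE : EdgesIn V E) (hacy : Acyclic E)
    (hT : IsTransitCluster V E T) (x : α) :
    ¬ (ClusterEdge E T t x t ∧ ClusterEdge E T t t x) := by
  rintro ⟨h1, h2⟩
  rcases h1 with ⟨_, _, he⟩ | ⟨hx, hxt, _, r, hr, hxr⟩ | ⟨_, _, htt, _⟩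
  · exact htV (hE _ _ he).2
  · rcases h2 with ⟨_, _, he⟩ | ⟨_, hne, _, _⟩ | ⟨_, hxT, hxt2, e, he, hex⟩
    · exact htV (hE _ _ he).1
    · exact hne rfl
    · obtain ⟨_, _, _, hemis, _, hre, _⟩ := hT
      obtain ⟨e'', he'', hree⟩ := hre ⟨e, he⟩ r hr
      have hx2 : x ∈ {u | u ∉ T ∧ E e'' u} := by
        rw [hemis e'' he'' e he]; exact ⟨hx, hex⟩
      exact hacy x (Relation.TransGen.tail' (Relation.ReflTransGen.head hxr hree) hx2.2)
  · exact htt rfl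

lemma chain_mem_V (hE : EdgesIn V E) : ∀ (p : List α) (a : α), a ∈ V →
    List.Chain' (fun x y => E x y ∨ E y x) (a :: p) → ∀ x ∈ a :: p, x ∈ V
  | [], a, ha, _, x, hx => by
      obtain rfl : x = a := by simpa using hx
      exact ha
  | b :: p, a, ha, hch, x, hx => by
      have h1 := List.isChain_cons_cons.mp hch
      have hb : b ∈ V := h1.1.elim (fun e => (hE _ _ e).2) (fun e => (hE _ _ e).1)
      rcases List.mem_cons.mp hx with rfl | hx
      · exact ha
      · exact chain_mem_V hE p b hb h1.2 x hx

end AuxLemmas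

/-- d-separation in the clustered graph implies d-separation of
the clustering-equivalent sets in the original graph. -/
theorem dsep_of_cluster_dsep
    (V : Set α) (E : α → α → Prop) (T : Set α) (t : α)
    (V₁ V₂ V₃ V₁' V₂' V₃' : Set α)
    (hdag : IsDAG V E)
    (ht : t ∉ V)
    (hT : IsTransitCluster V E T)
    (h1 : V₁ ⊆ V) (h2 : V₂ ⊆ V) (h3 : V₃ ⊆ V)
    (h12 : Disjoint V₁ V₂) (h13 : Disjoint V₁ V₃) (h23 : Disjoint V₂ V₃)
    (hT1 : T ⊆ V₁ ∨ T ∩ V₁ = ∅)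
    (hT2 : T ⊆ V₂ ∨ T ∩ V₂ = ∅)
    (hT3 : T ⊆ V₃ ∨ T ∩ V₃ = ∅)
    (hc1 : V₁' \ {t} = V₁ \ T) (hc1t : T ⊆ V₁ ↔ t ∈ V₁')
    (hc2 : V₂' \ {t} = V₂ \ T) (hc2t : T ⊆ V₂ ↔ t ∈ V₂')
    (hc3 : V₃' \ {t} = V₃ \ T) (hc3t : T ⊆ V₃ ↔ t ∈ V₃')
    (hsep : DSep (ClusterEdge E T t) V₁' V₂' V₃') :
    DSep E V₁ V₂ V₃ := by
  classical
  obtain ⟨hfin, hE, hacy⟩ := hdag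
  rintro u hu v hv ⟨p, hnd, hhd, hlast, hch, hact⟩
  have hnb : ∀ x y, E x y → E y x → False := fun x y hxy hyx =>
    hacy x (Relation.TransGen.tail' (Relation.ReflTransGen.single hxy) hyx)
  have hnboth : ∀ x, ¬ (ClusterEdge E T t x t ∧ ClusterEdge E T t t x) :=
    clusterEdge_not_both ht hE hacy hT
  have hpV : ∀ x ∈ p, x ∈ V := by
    rcases p with _ | ⟨a, p'⟩
    · simp at hhd
    · obtain rfl : a = u := by simpa using hhd
      exact chain_mem_V hE p' a (h1 hu) hch
  have hCiff : ∀ x y, x ∈ V → y ∈ V → x ∉ T → y ∉ T →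
      (ClusterEdge E T t x y ↔ E x y) := by
    intro x y hx hy hxT hyT
    constructor
    · rintro (⟨_, _, he⟩ | ⟨_, _, hyt, _⟩ | ⟨hxt, _, _, _⟩)
      · exact he
      · exact absurd (hyt ▸ hy) ht
      · exact absurd (hxt ▸ hx) ht
    · exact fun he => Or.inl ⟨hxT, hyT, he⟩
  have hmkBt : ∀ b m, b ∈ V → b ∉ T → m ∈ T → E b m → ClusterEdge E T t b t :=
    fun b m hb hbT hm he =>
      Or.inr (Or.inl ⟨hbT, fun hh => ht (hh ▸ hb), rfl, m, ⟨hm, b, hbT, he⟩, he⟩)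
  have hmkTb : ∀ b m, b ∈ V → b ∉ T → m ∈ T → E m b → ClusterEdge E T t t b :=
    fun b m hb hbT hm he =>
      Or.inr (Or.inr ⟨rfl, hbT, fun hh => ht (hh ▸ hb), m, ⟨hm, b, hbT, he⟩, he⟩)
  have hV3iff : ∀ x, x ∈ V → x ∉ T → (x ∈ V₃ ↔ x ∈ V₃') := by
    intro x hx hxT
    have hxt : x ≠ t := fun hh => ht (hh ▸ hx)
    constructor
    · intro h
      have hx2 : x ∈ V₃' \ {t} := by rw [hc3]; exact ⟨h, hxT⟩
      exact hx2.1
    · intro h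
      have hx2 : x ∈ V₃' \ {t} := ⟨h, hxt⟩
      rw [hc3] at hx2
      exact hx2.1
  have htV3 : ∀ x, x ∈ T → x ∉ V₃ → t ∉ V₃' :=
    fun x hx h3 htv => h3 (hc3t.mpr htv hx)
  have hVreach : ∀ b d, b ∈ V → Relation.ReflTransGen E b d → d ∈ V := by
    intro b d hb hr
    rcases Relation.ReflTransGen.cases_tail hr with h | ⟨c, _, hcd⟩
    · rw [h]; exact hb
    · exact (hE _ _ hcd).2
  have hdesc : ∀ b, b ∈ V → (∃ d ∈ V₃, Relation.ReflTransGen E b d) →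
      ∀ b', ((b ∈ T ∧ b' = t) ∨ (b ∉ T ∧ b' = b)) →
      ∃ d' ∈ V₃', Relation.ReflTransGen (ClusterEdge E T t) b' d' := by
    rintro b hb ⟨d, hd3, hr⟩ b' hb'
    by_cases hdT : d ∈ T
    · refine ⟨t, ?_, lift_reach ht hE hr b' t hb' (Or.inl ⟨hdT, rfl⟩)⟩
      rcases hT3 with hsub | hemp
      · exact hc3t.mp hsub
      · have : d ∈ T ∩ V₃ := ⟨hdT, hd3⟩
        rw [hemp] at this
        exact this.elim
    · exact ⟨d, (hV3iff d (hVreach b d hb hr) hdT).mp hd3,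
        lift_reach ht hE hr b' d hb' (Or.inr ⟨hdT, rfl⟩)⟩
  have htrans : ∀ a b c, a ∈ V → b ∈ V → c ∈ V → a ∉ T → b ∉ T → c ∉ T →
      ActiveTriple E V₃ a b c → ActiveTriple (ClusterEdge E T t) V₃' a b c := by
    rintro a b c ha hb hc haT hbT hcT (⟨e1, e2, hd⟩ | ⟨hn, h3⟩)
    · exact Or.inl ⟨(hCiff a b ha hb haT hbT).mpr e1, (hCiff c b hc hb hcT hbT).mpr e2,
        hdesc b hb hd b (Or.inr ⟨hbT, rfl⟩)⟩
    · exact Or.inr ⟨fun hcol => hn ⟨(hCiff a b ha hb haT hbT).mp hcol.1,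
        (hCiff c b hc hb hcT hbT).mp hcol.2⟩,
        fun hh => h3 ((hV3iff b hb hbT).mpr hh)⟩
  rcases exists_decomp T p with hall | ⟨A, m₁, M', m₂, M₂, B, hp, hM, hA, hB, hm₁T, hm₂T⟩
  · -- Case 1: the path avoids T entirely
    have hup : u ∈ p := List.mem_of_mem_head? (Option.mem_def.mpr hhd)
    have hvp : v ∈ p := List.mem_of_mem_getLast? (Option.mem_def.mpr hlast)
    have huT := hall u hup
    have hvT := hall v hvp
    have hu' : u ∈ V₁' := by
      have h2 : u ∈ V₁' \ {t} := by rw [hc1]; exact ⟨hu, huT⟩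
      exact h2.1
    have hv' : v ∈ V₂' := by
      have h2 : v ∈ V₂' \ {t} := by rw [hc2]; exact ⟨hv, hvT⟩
      exact h2.1
    refine hsep u hu' v hv' ⟨p, hnd, hhd, hlast, ?_, ?_⟩
    · exact chain'_transfer p hch fun x hx y hy hr =>
        hr.imp ((hCiff x y (hpV x hx) (hpV y hy) (hall x hx) (hall y hy)).mpr)
          ((hCiff y x (hpV y hy) (hpV x hx) (hall y hy) (hall x hx)).mpr)
    · refine activeTriples_of_forall p fun l r a b c hpe => ?_
      have htri := activeTriples_infix l (hpe ▸ hact)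
      have ha : a ∈ p := by rw [hpe]; simp
      have hb : b ∈ p := by rw [hpe]; simp
      have hc : c ∈ p := by rw [hpe]; simp
      exact htrans a b c (hpV a ha) (hpV b hb) (hpV c hc)
        (hall a ha) (hall b hb) (hall c hc) htri
  · -- Case 2: the path meets T
    subst hp
    have hVA : ∀ x ∈ A, x ∈ V := fun x hx => hpV x (by simp [hx])
    have hVB : ∀ x ∈ B, x ∈ V := fun x hx => hpV x (by simp [hx])
    have hVm₁ : m₁ ∈ V := hpV m₁ (by simp)
    have hVm₂ : m₂ ∈ V := hpV m₂ (by rw [hM]; simp)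
    have hm2eq : (m₁ :: M').getLast? = some m₂ := by rw [hM]; simp
    have htA : t ∉ A := fun hh => ht (hVA t hh)
    have htB : t ∉ B := fun hh => ht (hVB t hh)
    have hqnd : (A ++ t :: B).Nodup := by
      have hnd' : (A ++ ((m₁ :: M') ++ B)).Nodup := by simpa [List.append_assoc] using hnd
      obtain ⟨hAnd, hMB, hdisjA⟩ := List.nodup_append'.mp hnd'
      obtain ⟨_, hBnd, _⟩ := List.nodup_append'.mp hMB
      refine List.nodup_append'.mpr ⟨hAnd, List.nodup_cons.mpr ⟨htB, hBnd⟩, ?_⟩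
      intro x hxA hxtB
      rcases List.mem_cons.mp hxtB with rfl | hxB
      · exact htA hxA
      · exact hdisjA hxA (List.mem_append_right _ hxB)
    obtain ⟨u', hu', hqhd⟩ : ∃ u', u' ∈ V₁' ∧ (A ++ t :: B).head? = some u' := by
      rcases A with _ | ⟨a, A'⟩
      · have hueq : m₁ = u := by simpa using hhd
        have hsub : T ⊆ V₁ := by
          rcases hT1 with h | h
          · exact h
          · have hmem : u ∈ T ∩ V₁ := ⟨hueq ▸ hm₁T, hu⟩
            rw [h] at hmem
            exact hmem.elim
        exact ⟨t, hc1t.mp hsub, rfl⟩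
      · have hueq : a = u := by simpa using hhd
        have huT : u ∉ T := hueq ▸ hA a (by simp)
        have h2 : u ∈ V₁' \ {t} := by rw [hc1]; exact ⟨hu, huT⟩
        exact ⟨u, h2.1, by rw [← hueq]; simp⟩
    obtain ⟨v', hv', hqlast⟩ : ∃ v', v' ∈ V₂' ∧ (A ++ t :: B).getLast? = some v' := by
      rcases List.eq_nil_or_concat B with rfl | ⟨B', b₂, rfl⟩
      · have hveq : m₂ = v := by
          rw [hM] at hlast
          simpa [List.getLast?_append] using hlast
        have hsub : T ⊆ V₂ := by
          rcases hT2 with h | h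
          · exact h
          · have hmem : v ∈ T ∩ V₂ := ⟨hveq ▸ hm₂T, hv⟩
            rw [h] at hmem
            exact hmem.elim
        refine ⟨t, hc2t.mp hsub, ?_⟩
        simp [List.getLast?_append]
      · have hveq : b₂ = v := by
          have h5 : ((A ++ m₁ :: M' ++ B') ++ [b₂]).getLast? = some v := by
            simpa [List.concat_eq_append, List.append_assoc] using hlast
          rw [List.getLast?_concat] at h5
          exact Option.some.inj h5
        have hvT : v ∉ T := hveq ▸ hB b₂ (by simp [List.concat_eq_append])
        have h2 : v ∈ V₂' \ {t} := by rw [hc2]; exact ⟨hv, hvT⟩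
        refine ⟨v, h2.1, ?_⟩
        rw [← hveq]
        rw [show A ++ t :: B'.concat b₂ = (A ++ t :: B') ++ [b₂] by
          simp [List.concat_eq_append, List.append_assoc]]
        exact List.getLast?_concat
    have hqch : List.Chain' (fun a b => ClusterEdge E T t a b ∨ ClusterEdge E T t b a)
        (A ++ t :: B) := by
      unfold List.Chain'
      rw [List.isChain_append]
      refine ⟨?_, ?_, ?_⟩
      · refine chain'_transfer A (hch.infix ⟨[], (m₁ :: M') ++ B, by simp⟩) ?_
        intro x hx y hy hr
        exact hr.imp ((hCiff x y (hVA x hx) (hVA y hy) (hA x hx) (hA y hy)).mpr)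
          ((hCiff y x (hVA y hy) (hVA x hx) (hA y hy) (hA x hx)).mpr)
      · rcases B with _ | ⟨b₀, B'⟩
        · simp
        · rw [List.isChain_cons_cons]
          constructor
          · have hedge : E m₂ b₀ ∨ E b₀ m₂ := by
              refine chain'_middle (R := fun a b => E a b ∨ E b a) (A ++ M₂) (r := B') ?_
              have heq2 : A ++ (m₁ :: M') ++ (b₀ :: B') = (A ++ M₂) ++ m₂ :: b₀ :: B' := by
                rw [hM]; simp [List.append_assoc]
              rw [← heq2]; exact hch
            have hb₀V : b₀ ∈ V := hVB b₀ (by simp)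
            have hb₀T : b₀ ∉ T := hB b₀ (by simp)
            rcases hedge with h | h
            · exact Or.inl (hmkTb b₀ m₂ hb₀V hb₀T hm₂T h)
            · exact Or.inr (hmkBt b₀ m₂ hb₀V hb₀T hm₂T h)
          · refine chain'_transfer (b₀ :: B') (hch.infix ⟨A ++ (m₁ :: M'), [], by simp⟩) ?_
            intro x hx y hy hr
            exact hr.imp ((hCiff x y (hVB x hx) (hVB y hy) (hB x hx) (hB y hy)).mpr)
              ((hCiff y x (hVB y hy) (hVB x hx) (hB y hy) (hB x hx)).mpr)
      · intro x hx y hy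
        obtain rfl : t = y := by simpa using hy
        obtain ⟨A₂, rfl⟩ : ∃ A₂, A = A₂ ++ [x] :=
          List.getLast?_eq_some_iff.mp (Option.mem_def.mp hx)
        have hxV : x ∈ V := hVA x (by simp)
        have hxT : x ∉ T := hA x (by simp)
        have hedge : E x m₁ ∨ E m₁ x := by
          refine chain'_middle (R := fun a b => E a b ∨ E b a) A₂ (r := M' ++ B) ?_
          have heq2 : (A₂ ++ [x]) ++ (m₁ :: M') ++ B = A₂ ++ x :: m₁ :: (M' ++ B) := by
            simp [List.append_assoc]
          rw [← heq2]; exact hch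
        rcases hedge with h | h
        · exact Or.inl (hmkBt x m₁ hxV hxT hm₁T h)
        · exact Or.inr (hmkTb x m₁ hxV hxT hm₁T h)
    have hqact : ActiveTriples (ClusterEdge E T t) V₃' (A ++ t :: B) := by
      have case_inA : ∀ l' s₄ (a b c : α), A = l' ++ a :: b :: c :: s₄ →
          ActiveTriple (ClusterEdge E T t) V₃' a b c := by
        intro l' s₄ a b c hAe
        have haA : a ∈ A := by rw [hAe]; simp
        have hbA : b ∈ A := by rw [hAe]; simp
        have hcA : c ∈ A := by rw [hAe]; simp
        have htri : ActiveTriple E V₃ a b c := by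
          refine activeTriples_infix l' (r := s₄ ++ ((m₁ :: M') ++ B)) ?_
          have heq3 : A ++ (m₁ :: M') ++ B = l' ++ a :: b :: c :: (s₄ ++ ((m₁ :: M') ++ B)) := by
            rw [hAe]; simp [List.append_assoc]
          rw [← heq3]; exact hact
        exact htrans a b c (hVA a haA) (hVA b hbA) (hVA c hcA)
          (hA a haA) (hA b hbA) (hA c hcA) htri
      have case_inB : ∀ s₄ (a b c : α) r', B = s₄ ++ a :: b :: c :: r' →
          ActiveTriple (ClusterEdge E T t) V₃' a b c := by
        intro s₄ a b c r' hBe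
        have haB : a ∈ B := by rw [hBe]; simp
        have hbB : b ∈ B := by rw [hBe]; simp
        have hcB : c ∈ B := by rw [hBe]; simp
        have htri : ActiveTriple E V₃ a b c := by
          refine activeTriples_infix (A ++ (m₁ :: M') ++ s₄) (r := r') ?_
          have heq3 : A ++ (m₁ :: M') ++ B = (A ++ (m₁ :: M') ++ s₄) ++ a :: b :: c :: r' := by
            rw [hBe]; simp [List.append_assoc]
          rw [← heq3]; exact hact
        exact htrans a b c (hVB a haB) (hVB b hbB) (hVB c hcB)
          (hB a haB) (hB b hbB) (hB c hcB) htri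
      have case_abt : ∀ l' (a b : α), A = l' ++ [a, b] →
          ActiveTriple (ClusterEdge E T t) V₃' a b t := by
        intro l' a b hAe
        have haV : a ∈ V := hVA a (by rw [hAe]; simp)
        have hbV : b ∈ V := hVA b (by rw [hAe]; simp)
        have haT : a ∉ T := hA a (by rw [hAe]; simp)
        have hbT : b ∉ T := hA b (by rw [hAe]; simp)
        have heq2 : A ++ (m₁ :: M') ++ B = l' ++ a :: b :: m₁ :: (M' ++ B) := by
          rw [hAe]; simp [List.append_assoc]
        have htri : ActiveTriple E V₃ a b m₁ := by
          refine activeTriples_infix l' (r := M' ++ B) ?_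
          rw [← heq2]; exact hact
        have hedge : E b m₁ ∨ E m₁ b := by
          refine chain'_middle (R := fun a b => E a b ∨ E b a) (l' ++ [a]) (r := M' ++ B) ?_
          have heq3 : A ++ (m₁ :: M') ++ B = (l' ++ [a]) ++ b :: m₁ :: (M' ++ B) := by
            rw [hAe]; simp [List.append_assoc]
          rw [← heq3]; exact hch
        rcases hedge with hbm | hmb
        · have hbt : ClusterEdge E T t b t := hmkBt b m₁ hbV hbT hm₁T hbm
          have h3 : b ∉ V₃ := by
            rcases htri with ⟨_, e2, _⟩ | ⟨_, h3⟩
            · exact absurd e2 fun e2 => hnb b m₁ hbm e2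
            · exact h3
          exact Or.inr ⟨fun hcol => hnboth b ⟨hbt, hcol.2⟩,
            fun hh => h3 ((hV3iff b hbV hbT).mpr hh)⟩
        · have htb : ClusterEdge E T t t b := hmkTb b m₁ hbV hbT hm₁T hmb
          rcases htri with ⟨e1, _, hd⟩ | ⟨hn, h3⟩
          · exact Or.inl ⟨(hCiff a b haV hbV haT hbT).mpr e1, htb,
              hdesc b hbV hd b (Or.inr ⟨hbT, rfl⟩)⟩
          · exact Or.inr ⟨fun hcol => hn ⟨(hCiff a b haV hbV haT hbT).mp hcol.1, hmb⟩,
              fun hh => h3 ((hV3iff b hbV hbT).mpr hh)⟩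
      have case_tbc : ∀ (b c : α) r', B = b :: c :: r' →
          ActiveTriple (ClusterEdge E T t) V₃' t b c := by
        intro b c r' hBe
        have hbV : b ∈ V := hVB b (by rw [hBe]; simp)
        have hcV : c ∈ V := hVB c (by rw [hBe]; simp)
        have hbT : b ∉ T := hB b (by rw [hBe]; simp)
        have hcT : c ∉ T := hB c (by rw [hBe]; simp)
        have heq2 : A ++ (m₁ :: M') ++ B = (A ++ M₂) ++ m₂ :: b :: c :: r' := by
          rw [hBe, hM]; simp [List.append_assoc]
        have htri : ActiveTriple E V₃ m₂ b c := by
          refine activeTriples_infix (A ++ M₂) (r := r') ?_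
          rw [← heq2]; exact hact
        have hedge : E m₂ b ∨ E b m₂ := by
          refine chain'_middle (R := fun a b => E a b ∨ E b a) (A ++ M₂) (r := c :: r') ?_
          rw [← heq2]; exact hch
        rcases hedge with hmb | hbm
        · have htb : ClusterEdge E T t t b := hmkTb b m₂ hbV hbT hm₂T hmb
          rcases htri with ⟨_, e2, hd⟩ | ⟨hn, h3⟩
          · exact Or.inl ⟨htb, (hCiff c b hcV hbV hcT hbT).mpr e2,
              hdesc b hbV hd b (Or.inr ⟨hbT, rfl⟩)⟩
          · exact Or.inr ⟨fun hcol => hn ⟨hmb, (hCiff c b hcV hbV hcT hbT).mp hcol.2⟩,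
              fun hh => h3 ((hV3iff b hbV hbT).mpr hh)⟩
        · have hbt : ClusterEdge E T t b t := hmkBt b m₂ hbV hbT hm₂T hbm
          have h3 : b ∉ V₃ := by
            rcases htri with ⟨e1, _, _⟩ | ⟨_, h3⟩
            · exact absurd e1 fun e1 => hnb b m₂ hbm e1
            · exact h3
          exact Or.inr ⟨fun hcol => hnboth b ⟨hbt, hcol.1⟩,
            fun hh => h3 ((hV3iff b hbV hbT).mpr hh)⟩
      have case_atc : ∀ l' (a c : α) r', A = l' ++ [a] → B = c :: r' →
          ActiveTriple (ClusterEdge E T t) V₃' a t c := by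
        intro l' a c r' hAe hBe
        have haV : a ∈ V := hVA a (by rw [hAe]; simp)
        have haT : a ∉ T := hA a (by rw [hAe]; simp)
        have hcV : c ∈ V := hVB c (by rw [hBe]; simp)
        have hcT : c ∉ T := hB c (by rw [hBe]; simp)
        have heq1 : A ++ (m₁ :: M') ++ B = l' ++ a :: m₁ :: (M' ++ c :: r') := by
          rw [hAe, hBe]; simp [List.append_assoc]
        have hedge1 : E a m₁ ∨ E m₁ a := by
          refine chain'_middle (R := fun a b => E a b ∨ E b a) l' (r := M' ++ c :: r') ?_
          rw [← heq1]; exact hch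
        have heq2 : A ++ (m₁ :: M') ++ B = (l' ++ [a] ++ M₂) ++ m₂ :: c :: r' := by
          rw [hAe, hBe, hM]; simp [List.append_assoc]
        have hedge2 : E m₂ c ∨ E c m₂ := by
          refine chain'_middle (R := fun a b => E a b ∨ E b a) (l' ++ [a] ++ M₂) (r := r') ?_
          rw [← heq2]; exact hch
        rcases hedge1 with ham | hma
        · rcases hedge2 with hmc | hcm
          · -- E a m₁ and E m₂ c : t is a non-collider, exit side points out
            have htc : ClusterEdge E T t t c := hmkTb c m₂ hcV hcT hm₂T hmc
            obtain ⟨Y, y, hY⟩ : ∃ Y y, l' ++ [a] ++ M₂ = Y ++ [y] := by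
              rcases List.eq_nil_or_concat (l' ++ [a] ++ M₂) with h | ⟨Y, y, h⟩
              · exact absurd h (by simp)
              · exact ⟨Y, y, by rw [h]; simp [List.concat_eq_append]⟩
            have htri : ActiveTriple E V₃ y m₂ c := by
              refine activeTriples_infix Y (r := r') ?_
              have heq3 : A ++ (m₁ :: M') ++ B = Y ++ y :: m₂ :: c :: r' := by
                rw [heq2, hY]; simp [List.append_assoc]
              rw [← heq3]; exact hact
            have h3 : m₂ ∉ V₃ := by
              rcases htri with ⟨_, e2, _⟩ | ⟨_, h3⟩
              · exact absurd e2 fun e2 => hnb m₂ c hmc e2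
              · exact h3
            exact Or.inr ⟨fun hcol => hnboth c ⟨hcol.2, htc⟩, htV3 m₂ hm₂T h3⟩
          · -- E a m₁ and E c m₂ : t is a collider with a descendant in V₃'
            have hat : ClusterEdge E T t a t := hmkBt a m₁ haV haT hm₁T ham
            have hct : ClusterEdge E T t c t := hmkBt c m₂ hcV hcT hm₂T hcm
            have hchseg : List.Chain' (fun x y => E x y ∨ E y x) (a :: m₁ :: M' ++ [c]) := by
              refine hch.infix ⟨l', r', ?_⟩
              rw [hAe, hBe]; simp [List.append_assoc]
            have hactseg : ActiveTriples E V₃ (a :: m₁ :: M' ++ [c]) := by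
              refine activeTriples_infix' l' (a :: m₁ :: M' ++ [c]) r' ?_
              have heq3 : l' ++ (a :: m₁ :: M' ++ [c]) ++ r' = A ++ (m₁ :: M') ++ B := by
                rw [hAe, hBe]; simp [List.append_assoc]
              rw [heq3]; exact hact
            obtain ⟨d, hd3, hr⟩ := segment_collider hnb M' a m₁ m₂ c hchseg hactseg ham hm2eq hcm
            obtain ⟨d', hd', hr'⟩ := hdesc m₁ hVm₁ ⟨d, hd3, hr⟩ t (Or.inl ⟨hm₁T, rfl⟩)
            exact Or.inl ⟨hat, hct, d', hd', hr'⟩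
        · -- E m₁ a : t is a non-collider, entry side points out
          have hta : ClusterEdge E T t t a := hmkTb a m₁ haV haT hm₁T hma
          obtain ⟨x, rest, hxr⟩ : ∃ x rest, M' ++ c :: r' = x :: rest := by
            rcases M' with _ | ⟨y, M₄⟩
            · exact ⟨c, r', rfl⟩
            · exact ⟨y, M₄ ++ c :: r', rfl⟩
          have htri : ActiveTriple E V₃ a m₁ x := by
            refine activeTriples_infix l' (r := rest) ?_
            have heq3 : A ++ (m₁ :: M') ++ B = l' ++ a :: m₁ :: x :: rest := by
              rw [heq1, hxr]
            rw [← heq3]; exact hact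
          have h3 : m₁ ∉ V₃ := by
            rcases htri with ⟨e1, _, _⟩ | ⟨_, h3⟩
            · exact absurd e1 fun e1 => hnb m₁ a hma e1
            · exact h3
          exact Or.inr ⟨fun hcol => hnboth a ⟨hcol.1, hta⟩, htV3 m₁ hm₁T h3⟩
      refine activeTriples_of_forall _ fun l r a b c heq => ?_
      rcases List.append_eq_append_iff.mp heq with ⟨s, hl, hs⟩ | ⟨s, hAe, hs⟩
      · rcases s with _ | ⟨s₀, s'⟩
        · simp only [List.nil_append] at hs
          injection hs with h₁ h₂
          subst h₁
          exact case_tbc b c r h₂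
        · rw [List.cons_append] at hs
          injection hs with h₁ h₂
          exact case_inB s' a b c r h₂
      · rcases s with _ | ⟨s₀, s'⟩
        · simp only [List.append_nil] at hAe
          simp only [List.nil_append] at hs
          injection hs with h₁ h₂
          subst h₁
          exact case_tbc b c r h₂.symm
        · rcases s' with _ | ⟨s₁, s₅⟩
          · simp only [List.cons_append, List.nil_append] at hs
            injection hs with h₁ hs2
            injection hs2 with h₂ hs3
            subst h₂
            exact case_atc l a c r (by rw [hAe, h₁]) hs3.symm
          · rcases s₅ with _ | ⟨s₂, s₆⟩
            · simp only [List.cons_append, List.nil_append] at hs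
              injection hs with h₁ hs2
              injection hs2 with h₂ hs3
              injection hs3 with h₃ hs4
              subst h₃
              exact case_abt l a b (by rw [hAe, h₁, h₂])
            · simp only [List.cons_append] at hs
              injection hs with h₁ hs2
              injection hs2 with h₂ hs3
              injection hs3 with h₃ hs4
              exact case_inA l s₆ a b c (by rw [hAe, h₁, h₂, h₃])
    exact hsep u' hu' v' hv' ⟨A ++ t :: B, hqnd, hqhd, hqlast, hqch, hqact⟩
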